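/- Define ψ₀ : ℝ → ℂ² by ψ₀(x) = ( i√(k/(2β))·x·exp(−√(βk/2)·x²/2), exp(−√(βk/2)·x²/2) ), and for each natural number n let ψₙ = (b†)^[n] ψ₀ be the n-fold iterate of the raising operator b† applied to ψ₀. Then for every n ∈ ℕ, ψₙ is a γ₊-eigenstate of the harmonic Lévy-Leblond Hamiltonian with γ₊-eigenvalue ω(n + 1/2): (H_LL ψₙ)(x) = ω(n + 1/2) γ₊ ψₙ(x) for all x ∈ ℝ. (This is the constructive half of the paper's theorem that the γ₊-eigenvalues of the harmonic Lévy-Leblond Hamiltonian are ω(n + 1/2) with eigenstates (b†)ⁿ|0⟩.) -/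

import Mathlib

open Matrix

noncomputable section

/-- The gamma matrix `γ¹ = [[1,0],[0,−1]]`. -/
def γ1 : Matrix (Fin 2) (Fin 2) ℂ := !![1, 0; 0, -1]

/-- The gamma matrix `γ₊ = [[0,1],[0,0]]`. -/
def γp : Matrix (Fin 2) (Fin 2) ℂ := !![0, 1; 0, 0]

/-- The gamma matrix `γ₋ = [[0,0],[1,0]]`. -/
def γm : Matrix (Fin 2) (Fin 2) ℂ := !![0, 0; 1, 0]

/-- The harmonic Lévy-Leblond Hamiltonian:
`(H_LL ψ)(x) = β γ₋ ψ(x) − i γ¹ ψ′(x) + (k/2) x² γ₊ ψ(x)`. -/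
def HLL (β k : ℝ) (ψ : ℝ → (Fin 2 → ℂ)) : ℝ → (Fin 2 → ℂ) :=
  fun x => (β : ℂ) • γm.mulVec (ψ x) - Complex.I • γ1.mulVec (deriv ψ x)
    + ((k / 2 * x ^ 2 : ℝ) : ℂ) • γp.mulVec (ψ x)

/-- The lowering operator:
`(bψ)(x) = √(βk/2)·x·ψ(x) + ψ′(x) − i√(k/(2β)) γ₊ ψ(x)`. -/
def lower (β k : ℝ) (ψ : ℝ → (Fin 2 → ℂ)) : ℝ → (Fin 2 → ℂ) :=
  fun x => ((Real.sqrt (β * k / 2) * x : ℝ) : ℂ) • ψ x + deriv ψ x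
    - (Complex.I * ((Real.sqrt (k / (2 * β)) : ℝ) : ℂ)) • γp.mulVec (ψ x)

/-- The raising operator:
`(b†ψ)(x) = √(βk/2)·x·ψ(x) − ψ′(x) − i√(k/(2β)) γ₊ ψ(x)`. -/
def raise (β k : ℝ) (ψ : ℝ → (Fin 2 → ℂ)) : ℝ → (Fin 2 → ℂ) :=
  fun x => ((Real.sqrt (β * k / 2) * x : ℝ) : ℂ) • ψ x - deriv ψ x
    - (Complex.I * ((Real.sqrt (k / (2 * β)) : ℝ) : ℂ)) • γp.mulVec (ψ x)

/-- The vacuum state `ψ₀(x) = ( i√(k/(2β))·x·exp(−√(βk/2)·x²/2), exp(−√(βk/2)·x²/2) )`. -/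
def vacuum (β k : ℝ) : ℝ → (Fin 2 → ℂ) :=
  fun x => ![Complex.I * ((Real.sqrt (k / (2 * β)) : ℝ) : ℂ) * (x : ℂ)
      * Complex.exp (-(((Real.sqrt (β * k / 2) : ℝ) : ℂ)) * (x : ℂ) ^ 2 / 2),
    Complex.exp (-(((Real.sqrt (β * k / 2) : ℝ) : ℂ)) * (x : ℂ) ^ 2 / 2)]

open scoped ContDiff

namespace LLaux

variable (β k : ℝ)

lemma hbc (hβ : 0 < β) (hk : 0 < k) :
    β * Real.sqrt (k / (2 * β)) = Real.sqrt (β * k / 2) := by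
  rw [← Real.sqrt_sq hβ.le, ← Real.sqrt_mul (sq_nonneg β)]
  · congr 1
    field_simp
    rw [Real.sq_sqrt (sq_nonneg β)]

lemma homega (hβ : 0 < β) :
    Real.sqrt (2 * k / β) = 2 * Real.sqrt (k / (2 * β)) := by
  have h4 : 2 * k / β = 2 ^ 2 * (k / (2 * β)) := by
    field_simp
  rw [h4, Real.sqrt_mul (by positivity), Real.sqrt_sq (by norm_num)]

lemma hss (hβ : 0 < β) (hk : 0 < k) :
    β * (Real.sqrt (k / (2 * β)) * Real.sqrt (k / (2 * β))) = k / 2 := by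
  rw [Real.mul_self_sqrt (by positivity)]
  field_simp

lemma mulVec_hasDerivAt (M : Matrix (Fin 2) (Fin 2) ℂ) {ψ : ℝ → Fin 2 → ℂ} {x : ℝ}
    {v : Fin 2 → ℂ} (h : HasDerivAt ψ v x) :
    HasDerivAt (fun y => M.mulVec (ψ y)) (M.mulVec v) x := by
  have := ((ContinuousLinearMap.restrictScalars ℝ M.mulVecLin.toContinuousLinearMap).hasFDerivAt
    (x := ψ x)).comp_hasDerivAt x h
  simpa [Function.comp_def] using this

lemma mulVec_contDiff (M : Matrix (Fin 2) (Fin 2) ℂ) {ψ : ℝ → Fin 2 → ℂ}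
    (h : ContDiff ℝ ∞ ψ) : ContDiff ℝ ∞ (fun y => M.mulVec (ψ y)) := by
  exact (ContinuousLinearMap.restrictScalars ℝ M.mulVecLin.toContinuousLinearMap).contDiff.comp h

lemma ofReal_contDiff : ContDiff ℝ ∞ (fun x : ℝ => (x : ℂ)) :=
  Complex.ofRealCLM.contDiff

lemma raise_smooth {ψ : ℝ → Fin 2 → ℂ} (h : ContDiff ℝ ∞ ψ) :
    ContDiff ℝ ∞ (raise β k ψ) := by
  have hd : ContDiff ℝ ∞ (deriv ψ) := (contDiff_infty_iff_deriv.mp h).2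
  unfold raise
  have h1 : ContDiff ℝ ∞ (fun x : ℝ => ((Real.sqrt (β * k / 2) * x : ℝ) : ℂ)) :=
    Complex.ofRealCLM.contDiff.comp (contDiff_const.mul contDiff_id)
  have h2 : ContDiff ℝ ∞ (fun x : ℝ => γp.mulVec (ψ x)) := mulVec_contDiff γp h
  apply contDiff_pi.2
  intro i
  have hψi : ContDiff ℝ ∞ (fun x => ψ x i) := contDiff_pi.mp h i
  have hdi : ContDiff ℝ ∞ (fun x => deriv ψ x i) := contDiff_pi.mp hd i
  have hgi : ContDiff ℝ ∞ (fun x => γp.mulVec (ψ x) i) := contDiff_pi.mp h2 i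
  simp only [Pi.sub_apply, Pi.smul_apply, smul_eq_mul]
  exact ((h1.mul hψi).sub hdi).sub (contDiff_const.mul hgi)

lemma vacuum_smooth : ContDiff ℝ ∞ (vacuum β k) := by
  have hE : ContDiff ℝ ∞ (fun x : ℝ =>
      Complex.exp (-(((Real.sqrt (β * k / 2) : ℝ) : ℂ)) * (x : ℂ) ^ 2 / 2)) := by
    have hexp : ContDiff ℝ ∞ Complex.exp := Complex.contDiff_exp
    exact hexp.comp ((contDiff_const.mul (ofReal_contDiff.pow 2)).div_const 2)
  apply contDiff_pi.2
  intro i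
  fin_cases i
  · simpa [vacuum] using ((contDiff_const.mul ofReal_contDiff).mul hE)
  · simpa [vacuum] using hE

lemma iter_smooth (n : ℕ) : ContDiff ℝ ∞ ((raise β k)^[n] (vacuum β k)) := by
  induction n with
  | zero => simpa using vacuum_smooth β k
  | succ n ih =>
    rw [Function.iterate_succ_apply']
    exact raise_smooth β k ih

lemma raise_deriv {ψ : ℝ → Fin 2 → ℂ} (h : ContDiff ℝ ∞ ψ) (x : ℝ) :
    deriv (raise β k ψ) x
      = ((Real.sqrt (β * k / 2) * x : ℝ) : ℂ) • deriv ψ x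
          + ((Real.sqrt (β * k / 2) : ℝ) : ℂ) • ψ x
        - deriv (deriv ψ) x
        - (Complex.I * ((Real.sqrt (k / (2 * β)) : ℝ) : ℂ)) • γp.mulVec (deriv ψ x) := by
  have hd1 : Differentiable ℝ ψ := (contDiff_infty_iff_deriv.mp h).1
  have hd2 : Differentiable ℝ (deriv ψ) :=
    (contDiff_infty_iff_deriv.mp (contDiff_infty_iff_deriv.mp h).2).1
  have hsc : HasDerivAt (fun y : ℝ => ((Real.sqrt (β * k / 2) * y : ℝ) : ℂ))
      ((Real.sqrt (β * k / 2) : ℝ) : ℂ) x := by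
    have h1 : HasDerivAt (fun y : ℝ => Real.sqrt (β * k / 2) * y)
        (Real.sqrt (β * k / 2)) x := by
      simpa using (hasDerivAt_id x).const_mul (Real.sqrt (β * k / 2))
    exact Complex.ofRealCLM.hasFDerivAt.comp_hasDerivAt x h1
  exact (((hsc.smul (hd1 x).hasDerivAt).sub (hd2 x).hasDerivAt).sub
    ((mulVec_hasDerivAt γp (hd1 x).hasDerivAt).const_smul
      (Complex.I * ((Real.sqrt (k / (2 * β)) : ℝ) : ℂ)))).deriv

lemma HLL_deriv {ψ : ℝ → Fin 2 → ℂ} (h : ContDiff ℝ ∞ ψ) (x : ℝ) :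
    deriv (HLL β k ψ) x
      = ((β : ℂ) • γm.mulVec (deriv ψ x) - Complex.I • γ1.mulVec (deriv (deriv ψ) x))
        + (((k / 2 * x ^ 2 : ℝ) : ℂ) • γp.mulVec (deriv ψ x)
            + ((k * x : ℝ) : ℂ) • γp.mulVec (ψ x)) := by
  have hd1 : Differentiable ℝ ψ := (contDiff_infty_iff_deriv.mp h).1
  have hd2 : Differentiable ℝ (deriv ψ) :=
    (contDiff_infty_iff_deriv.mp (contDiff_infty_iff_deriv.mp h).2).1
  have hsc : HasDerivAt (fun y : ℝ => ((k / 2 * y ^ 2 : ℝ) : ℂ)) ((k * x : ℝ) : ℂ) x := by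
    have h1 : HasDerivAt (fun y : ℝ => k / 2 * y ^ 2) (k * x) x := by
      have := (hasDerivAt_pow 2 x).const_mul (k / 2)
      refine this.congr_deriv ?_
      push_cast
      ring
    exact Complex.ofRealCLM.hasFDerivAt.comp_hasDerivAt x h1
  exact ((((mulVec_hasDerivAt γm (hd1 x).hasDerivAt).const_smul (β : ℂ)).sub
    ((mulVec_hasDerivAt γ1 (hd2 x).hasDerivAt).const_smul Complex.I)).add
    (hsc.smul (mulVec_hasDerivAt γp (hd1 x).hasDerivAt))).deriv

lemma hkC (hβ : 0 < β) (hk : 0 < k) :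
    (k : ℂ) = 2 * (β : ℝ) * (((Real.sqrt (k / (2 * β)) : ℝ) : ℂ)
      * ((Real.sqrt (k / (2 * β)) : ℝ) : ℂ)) := by
  have h0 := hss β k hβ hk
  have hkR : k = 2 * β * (Real.sqrt (k / (2 * β)) * Real.sqrt (k / (2 * β))) := by linarith
  have hkR2 := congrArg Complex.ofReal hkR
  push_cast at hkR2
  exact hkR2

lemma comm (hβ : 0 < β) (hk : 0 < k) {ψ : ℝ → Fin 2 → ℂ} (h : ContDiff ℝ ∞ ψ) (x : ℝ) :
    HLL β k (raise β k ψ) x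
      = raise β k (HLL β k ψ) x
        + ((Real.sqrt (2 * k / β) : ℝ) : ℂ) • γp.mulVec (raise β k ψ x) := by
  have e1 := raise_deriv β k h x
  have e2 := HLL_deriv β k h x
  have hk2 := hkC β k hβ hk
  simp only [HLL, raise] at e1 e2 ⊢
  rw [e1, e2]
  rw [← hbc β k hβ hk, homega β k hβ]
  push_cast at hk2
  funext i
  fin_cases i <;>
    push_cast <;>
    rw [hk2] <;>
    simp [γ1, γp, γm, Matrix.mulVec, dotProduct, Fin.sum_univ_two,
      Matrix.vecHead, Matrix.vecTail, Function.comp, Complex.I_sq] <;>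
    ring_nf <;>
    simp only [Complex.I_sq] <;>
    ring_nf



lemma vacuum_hasDerivAt (x : ℝ) :
    HasDerivAt (vacuum β k)
      (![Complex.I * ((Real.sqrt (k / (2 * β)) : ℝ) : ℂ)
            * Complex.exp (-(((Real.sqrt (β * k / 2) : ℝ) : ℂ)) * (x : ℂ) ^ 2 / 2)
          + Complex.I * ((Real.sqrt (k / (2 * β)) : ℝ) : ℂ) * (x : ℂ)
            * (Complex.exp (-(((Real.sqrt (β * k / 2) : ℝ) : ℂ)) * (x : ℂ) ^ 2 / 2)
                * (-(((Real.sqrt (β * k / 2) : ℝ) : ℂ)) * (x : ℂ))),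
        Complex.exp (-(((Real.sqrt (β * k / 2) : ℝ) : ℂ)) * (x : ℂ) ^ 2 / 2)
          * (-(((Real.sqrt (β * k / 2) : ℝ) : ℂ)) * (x : ℂ))]) x := by
  have hx : HasDerivAt (fun y : ℝ => (y : ℂ)) 1 x := by
    simpa using (hasDerivAt_id x).ofReal_comp
  have hq : HasDerivAt (fun y : ℝ => -(((Real.sqrt (β * k / 2) : ℝ) : ℂ)) * (y : ℂ) ^ 2 / 2)
      (-(((Real.sqrt (β * k / 2) : ℝ) : ℂ)) * (x : ℂ)) x := by
    have h2 : HasDerivAt (fun y : ℝ => (y : ℂ) * (y : ℂ)) ((x : ℂ) + (x : ℂ)) x := by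
      have h := hx.mul hx
      simp only [one_mul, mul_one] at h
      exact h
    have h3 := h2.const_mul (-(((Real.sqrt (β * k / 2) : ℝ) : ℂ)) / 2)
    have hfun : (fun y : ℝ => -(((Real.sqrt (β * k / 2) : ℝ) : ℂ)) * (y : ℂ) ^ 2 / 2)
        = fun y : ℝ => (-(((Real.sqrt (β * k / 2) : ℝ) : ℂ)) / 2) * ((y : ℂ) * (y : ℂ)) := by
      funext y
      ring
    rw [hfun]
    refine h3.congr_deriv ?_
    ring
  have hE : HasDerivAt (fun y : ℝ =>
      Complex.exp (-(((Real.sqrt (β * k / 2) : ℝ) : ℂ)) * (y : ℂ) ^ 2 / 2))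
      (Complex.exp (-(((Real.sqrt (β * k / 2) : ℝ) : ℂ)) * (x : ℂ) ^ 2 / 2)
        * (-(((Real.sqrt (β * k / 2) : ℝ) : ℂ)) * (x : ℂ))) x := hq.cexp
  have hlin : HasDerivAt (fun y : ℝ =>
      Complex.I * ((Real.sqrt (k / (2 * β)) : ℝ) : ℂ) * (y : ℂ))
      (Complex.I * ((Real.sqrt (k / (2 * β)) : ℝ) : ℂ)) x := by
    simpa using hx.const_mul (Complex.I * ((Real.sqrt (k / (2 * β)) : ℝ) : ℂ))
  apply hasDerivAt_pi.2
  intro i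
  fin_cases i
  · simpa [vacuum, mul_assoc, Pi.mul_def] using hlin.mul hE
  · simpa [vacuum] using hE

lemma base (hβ : 0 < β) (hk : 0 < k) (x : ℝ) :
    HLL β k (vacuum β k) x
      = ((Real.sqrt (2 * k / β) * (1 / 2) : ℝ) : ℂ) • γp.mulVec (vacuum β k x) := by
  have hdv := (vacuum_hasDerivAt β k x).deriv
  have hk2 := hkC β k hβ hk
  push_cast at hk2
  simp only [HLL, vacuum]
  rw [hdv]
  set E := Complex.exp (-(((Real.sqrt (β * k / 2) : ℝ) : ℂ)) * (x : ℂ) ^ 2 / 2) with hEdef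
  rw [← hbc β k hβ hk, homega β k hβ]
  funext i
  fin_cases i <;>
    simp [γ1, γp, γm, Matrix.mulVec, dotProduct, Fin.sum_univ_two,
      Matrix.vecHead, Matrix.vecTail, Function.comp, Complex.I_sq] <;>
    push_cast <;>
    (try rw [hk2]) <;>
    ring_nf <;>
    (try simp only [Complex.I_sq]) <;>
    (try ring_nf) <;>
    (try ring)

lemma raise_gp {φ : ℝ → Fin 2 → ℂ} (hφ : ContDiff ℝ ∞ φ) (lam : ℂ) (x : ℝ) :
    raise β k (fun y => lam • γp.mulVec (φ y)) x = lam • γp.mulVec (raise β k φ x) := by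
  have hd1 : Differentiable ℝ φ := (contDiff_infty_iff_deriv.mp hφ).1
  have hder : deriv (fun y => lam • γp.mulVec (φ y)) x = lam • γp.mulVec (deriv φ x) :=
    ((mulVec_hasDerivAt γp (hd1 x).hasDerivAt).const_smul lam).deriv
  simp only [raise]
  rw [hder]
  funext i
  fin_cases i <;>
    simp [γp, Matrix.mulVec, dotProduct, Fin.sum_univ_two,
      Matrix.vecHead, Matrix.vecTail, Function.comp] <;>
    ring_nf

end LLaux

/-- For every `n ∈ ℕ`, the state `ψₙ = (b†)^[n] ψ₀` is a
`γ₊`-eigenstate of the harmonic Lévy-Leblond Hamiltonian with `γ₊`-eigenvalue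
`ω(n + 1/2)`, where `ω = √(2k/β)`. -/
theorem excited_states (β k : ℝ) (hβ : 0 < β) (hk : 0 < k) :
    ∀ n : ℕ, ∀ x : ℝ,
      HLL β k ((raise β k)^[n] (vacuum β k)) x
        = ((Real.sqrt (2 * k / β) * (n + 1 / 2) : ℝ) : ℂ)
            • γp.mulVec ((raise β k)^[n] (vacuum β k) x) := by
  intro n
  induction n with
  | zero =>
    intro x
    simpa using LLaux.base β k hβ hk x
  | succ n ih =>
    intro x
    have hsm := LLaux.iter_smooth β k n
    rw [Function.iterate_succ_apply']
    rw [LLaux.comm β k hβ hk hsm x]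
    have hfun : HLL β k ((raise β k)^[n] (vacuum β k))
        = fun y => ((Real.sqrt (2 * k / β) * (n + 1 / 2) : ℝ) : ℂ)
            • γp.mulVec ((raise β k)^[n] (vacuum β k) y) := funext ih
    rw [hfun, LLaux.raise_gp β k hsm _ x, ← add_smul]
    congr 1
    push_cast
    ring


end
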